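/- In the Einstein–Straus construction, the function R(τ) = a(τ)r₀, where a solves the Friedmann equation (ȧ/a)² + k/a² − C/a³ − Λ/3 = 0 and r₀ is constant, satisfies the radial geodesic equation of Schwarzschild–de Sitter Ṙ² + V(R) = e² with V(R) = 1 − 2m/R − (Λ/3)R², provided m = (C/2)r₀³ and e² = 1 − k r₀². -/

import Mathlib

/-- Einstein–Straus matching: if `a` solves the Friedmann equation
`(ȧ/a)² + k/a² − C/a³ − Λ/3 = 0`, then `R(τ) = a(τ)r₀` satisfies the radial
Schwarzschild–de Sitter geodesic equation `Ṙ² + V(R) = 1 − kr₀²` with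
`V(R) = 1 − 2m/R − (Λ/3)R²` and `m = (C/2)r₀³`. -/
theorem einstein_straus_matching_geodesic (a : ℝ → ℝ) (k C Λ r₀ : ℝ)
    (hC : 0 < C) (hr₀ : 0 < r₀) (hk : k * r₀ ^ 2 < 1)
    (ha : Differentiable ℝ a) (hapos : ∀ τ, 0 < a τ)
    (hFried : ∀ τ, (deriv a τ / a τ) ^ 2 + k / a τ ^ 2 - C / a τ ^ 3 - Λ / 3 = 0) :
    ∀ τ, (deriv (fun s => a s * r₀) τ) ^ 2 +
        (1 - 2 * ((C / 2) * r₀ ^ 3) / (a τ * r₀) - (Λ / 3) * (a τ * r₀) ^ 2)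
      = 1 - k * r₀ ^ 2 := by
  intro τ
  have hd : deriv (fun s => a s * r₀) τ = deriv a τ * r₀ := by
    simpa using (((ha τ).hasDerivAt.mul_const r₀).deriv)
  have hane : a τ ≠ 0 := (hapos τ).ne'
  have h := hFried τ
  rw [hd]
  field_simp at h ⊢
  have key : deriv a τ ^ 2 * a τ * 3 + k * a τ * 3 - C * 3 - Λ * a τ ^ 3 = 0 :=
    mul_left_cancel₀ (pow_ne_zero 2 hane)
      (by linear_combination a τ ^ 2 * h :
        a τ ^ 2 * (deriv a τ ^ 2 * a τ * 3 + k * a τ * 3 - C * 3 - Λ * a τ ^ 3) = a τ ^ 2 * 0)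
  linear_combination r₀ ^ 2 * key
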